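/- There is a dense operator range Y ⊂ ℓ₁ such that every non-zero element of Y has only a finite number of zero coordinates. -/

import Mathlib

noncomputable section
open NormedSpace

/-- A subspace is an operator range if it is the image of an injective bounded linear
operator from an infinite-dimensional Banach space. -/
def IsOperatorRange {X : Type*} [NormedAddCommGroup X] [NormedSpace ℝ X]
    (Y : Submodule ℝ X) : Prop :=
  ∃ (E : Type) (_ : NormedAddCommGroup E) (_ : NormedSpace ℝ E),
    CompleteSpace E ∧ ¬ FiniteDimensional ℝ E ∧
      ∃ T : E →L[ℝ] X, Function.Injective T ∧ Set.range T = (Y : Set X)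

/-- The space `ℓ₁` of absolutely summable real sequences. -/
abbrev ellOne : Type := lp (fun _ : ℕ => ℝ) 1

namespace DenseOR

open Filter Metric FormalMultilinearSeries
open scoped Topology NNReal ENNReal

/-- The sequence of evaluation points, strictly decreasing to `1/2`. -/
def tseq (n : ℕ) : ℝ := 2⁻¹ + 2⁻¹ ^ (n + 2)

lemma tseq_gt (n : ℕ) : (2⁻¹ : ℝ) < tseq n := by
  have : (0:ℝ) < 2⁻¹ ^ (n + 2) := by positivity
  simp only [tseq]; linarith

lemma tseq_pos (n : ℕ) : 0 < tseq n := lt_trans (by norm_num) (tseq_gt n)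

lemma tseq_le (n : ℕ) : tseq n ≤ 3/4 := by
  have h : (2⁻¹ : ℝ) ^ (n + 2) ≤ 2⁻¹ ^ 2 :=
    pow_le_pow_of_le_one (by norm_num) (by norm_num) (by omega)
  simp only [tseq]
  norm_num at h ⊢
  linarith

lemma tseq_anti : StrictAnti tseq := by
  intro m n h
  have := pow_lt_pow_right_of_lt_one₀ (a := (2⁻¹:ℝ)) (by norm_num) (by norm_num)
    (by omega : m + 2 < n + 2)
  simp only [tseq]
  linarith

lemma tseq_tendsto : Tendsto tseq atTop (𝓝 2⁻¹) := by
  have h : Tendsto (fun n : ℕ => (2⁻¹:ℝ) ^ (n + 2)) atTop (𝓝 0) :=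
    (tendsto_pow_atTop_nhds_zero_of_lt_one (by norm_num) (by norm_num)).comp
      (tendsto_add_atTop_nat 2)
  have h2 := (tendsto_const_nhds (x := (2⁻¹:ℝ)) (f := atTop (α := ℕ))).add h
  rw [add_zero] at h2
  exact h2

lemma summable_norm_mul_pow {c : ℕ → ℝ} (hc : Summable fun k => ‖c k‖) {r : ℝ}
    (hr : |r| ≤ 1) : Summable fun k => ‖c k * r ^ k‖ := by
  refine Summable.of_nonneg_of_le (fun k => norm_nonneg _) (fun k => ?_) hc
  rw [norm_mul, norm_pow]
  calc ‖c k‖ * ‖r‖ ^ k ≤ ‖c k‖ * 1 := by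
        refine mul_le_mul_of_nonneg_left ?_ (norm_nonneg _)
        exact pow_le_one₀ (norm_nonneg r) hr
    _ = ‖c k‖ := mul_one _

lemma summable_mul_pow {c : ℕ → ℝ} (hc : Summable fun k => ‖c k‖) {r : ℝ}
    (hr : |r| ≤ 1) : Summable fun k => c k * r ^ k :=
  (summable_norm_mul_pow hc hr).of_norm

lemma le_radius {c : ℕ → ℝ} (hc : Summable fun k => ‖c k‖) :
    ((7/8 : ℝ≥0) : ENNReal) ≤ (ofScalars ℝ c).radius := by
  refine FormalMultilinearSeries.le_radius_of_summable_norm _ ?_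
  refine Summable.of_nonneg_of_le (fun n => ?_) (fun n => ?_) hc
  · exact mul_nonneg (norm_nonneg _) (pow_nonneg (by positivity) _)
  · rw [ofScalars_norm]
    calc ‖c n‖ * ((7/8 : ℝ≥0) : ℝ) ^ n ≤ ‖c n‖ * 1 := by
          refine mul_le_mul_of_nonneg_left ?_ (norm_nonneg _)
          exact pow_le_one₀ (by positivity) (by norm_num)
      _ = ‖c n‖ := mul_one _

lemma hasFPB {c : ℕ → ℝ} (hc : Summable fun k => ‖c k‖) :
    HasFPowerSeriesOnBall (ofScalarsSum c) (ofScalars ℝ c) 0 ((7/8 : ℝ≥0) : ENNReal) := by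
  have h0 : (0 : ENNReal) < ((7/8 : ℝ≥0) : ENNReal) := by
    rw [ENNReal.coe_pos]; norm_num
  have hrad : (0 : ENNReal) < (ofScalars ℝ c).radius := lt_of_lt_of_le h0 (le_radius hc)
  exact ((ofScalars ℝ c).hasFPowerSeriesOnBall hrad).mono h0 (le_radius hc)

/-- Key analytic lemma: a nonzero ℓ¹ power series vanishes at only finitely many of the
points `tseq n`. -/
lemma finite_zeros {c : ℕ → ℝ} (hc : Summable fun k => ‖c k‖) (hne : c ≠ 0) :
    {n : ℕ | ofScalarsSum c (tseq n) = 0}.Finite := by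
  by_contra hinf
  replace hinf : {n : ℕ | ofScalarsSum c (tseq n) = 0}.Infinite := hinf
  -- frequently zero near 1/2
  have freq1 : ∃ᶠ n in atTop, ofScalarsSum c (tseq n) = 0 := by
    rw [frequently_atTop]
    intro a
    obtain ⟨b, hb, hab⟩ := hinf.exists_gt a
    exact ⟨b, hab.le, hb⟩
  have htend : Tendsto tseq atTop (𝓝[≠] (2⁻¹ : ℝ)) :=
    tendsto_nhdsWithin_of_tendsto_nhds_of_eventually_within tseq tseq_tendsto
      (Eventually.of_forall fun n => (tseq_gt n).ne')
  have freq2 : ∃ᶠ t in 𝓝[≠] (2⁻¹ : ℝ), ofScalarsSum c t = 0 := htend.frequently freq1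
  -- analytic on the ball of radius 7/8
  have hana : AnalyticOnNhd ℝ (ofScalarsSum c) (Metric.ball (0:ℝ) ((7/8 : ℝ≥0) : ℝ)) := by
    intro z hz
    refine (hasFPB hc).analyticAt_of_mem ?_
    rw [Metric.emetric_ball_nnreal]
    exact hz
  have hU : IsPreconnected (Metric.ball (0:ℝ) ((7/8 : ℝ≥0) : ℝ)) :=
    (convex_ball _ _).isPreconnected
  have hmem : (2⁻¹ : ℝ) ∈ Metric.ball (0:ℝ) ((7/8 : ℝ≥0) : ℝ) := by
    simp only [Metric.mem_ball, Real.dist_eq, sub_zero]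
    rw [abs_of_pos (by norm_num)]
    norm_num
  have heq : Set.EqOn (ofScalarsSum c) 0 (Metric.ball (0:ℝ) ((7/8 : ℝ≥0) : ℝ)) :=
    hana.eqOn_zero_of_preconnected_of_frequently_eq_zero hU hmem freq2
  have h0mem : (0 : ℝ) ∈ Metric.ball (0:ℝ) ((7/8 : ℝ≥0) : ℝ) := by
    simp only [Metric.mem_ball, dist_self]; norm_num
  have hev : ofScalarsSum c =ᶠ[𝓝 (0:ℝ)] 0 :=
    Filter.eventuallyEq_of_mem (Metric.isOpen_ball.mem_nhds h0mem) heq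
  have hp0 : ofScalars ℝ c = 0 := (hasFPB hc).hasFPowerSeriesAt.eq_zero_of_eventually hev
  exact hne ((ofScalars_series_eq_zero ℝ).mp hp0)

lemma summable_coe (x : ellOne) : Summable fun k => ‖x k‖ := by
  have h := lp.memℓp x
  rw [memℓp_gen_iff (by norm_num : 0 < (1 : ENNReal).toReal)] at h
  simpa using h

lemma norm_eq (x : ellOne) : ‖x‖ = ∑' k, ‖x k‖ := by
  rw [lp.norm_eq_tsum_rpow (by norm_num : 0 < (1 : ENNReal).toReal) x]
  simp

lemma abs_tseq_le (n : ℕ) : |tseq n| ≤ 1 := by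
  rw [abs_of_pos (tseq_pos n)]
  linarith [tseq_le n]

lemma ofScalarsSum_abs_le {c : ℕ → ℝ} (hc : Summable fun k => ‖c k‖) {r : ℝ}
    (hr : |r| ≤ 1) : ‖ofScalarsSum c r‖ ≤ ∑' k, ‖c k‖ := by
  rw [ofScalars_sum_eq]
  simp only [smul_eq_mul]
  calc ‖∑' k, c k * r ^ k‖ ≤ ∑' k, ‖c k * r ^ k‖ :=
        norm_tsum_le_tsum_norm (summable_norm_mul_pow hc hr)
    _ ≤ ∑' k, ‖c k‖ := by
        refine Summable.tsum_le_tsum (fun k => ?_) (summable_norm_mul_pow hc hr) hc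
        rw [norm_mul, norm_pow]
        calc ‖c k‖ * ‖r‖ ^ k ≤ ‖c k‖ * 1 :=
              mul_le_mul_of_nonneg_left (pow_le_one₀ (norm_nonneg r) hr) (norm_nonneg _)
          _ = ‖c k‖ := mul_one _

/-- The underlying function of the operator. -/
def Tfun (x : ellOne) : ℕ → ℝ := fun n => 2⁻¹ ^ n * ofScalarsSum (fun k => x k) (tseq n)

lemma Tfun_norm_le (x : ellOne) (n : ℕ) : ‖Tfun x n‖ ≤ 2⁻¹ ^ n * ‖x‖ := by
  rw [Tfun, norm_mul, norm_pow, norm_eq x]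
  have h1 : ‖(2:ℝ)⁻¹‖ = 2⁻¹ := by rw [Real.norm_eq_abs, abs_of_pos]; norm_num
  rw [h1]
  exact mul_le_mul_of_nonneg_left
    (ofScalarsSum_abs_le (summable_coe x) (abs_tseq_le n)) (by positivity)

lemma summable_bound (B : ℝ) : Summable fun n : ℕ => (2⁻¹ : ℝ) ^ n * B :=
  (summable_geometric_of_lt_one (by norm_num) (by norm_num)).mul_right B

lemma Tfun_mem (x : ellOne) : Memℓp (Tfun x) 1 := by
  apply memℓp_gen
  have : Summable fun n => ‖Tfun x n‖ :=
    Summable.of_nonneg_of_le (fun n => norm_nonneg _) (Tfun_norm_le x) (summable_bound ‖x‖)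
  simpa using this

/-- The operator as a linear map. -/
def TL : ellOne →ₗ[ℝ] ellOne where
  toFun x := ⟨Tfun x, Tfun_mem x⟩
  map_add' x y := by
    apply lp.ext
    funext n
    have hx := summable_mul_pow (summable_coe x) (abs_tseq_le n)
    have hy := summable_mul_pow (summable_coe y) (abs_tseq_le n)
    have hco : (fun k => ((x + y) : ellOne) k) = fun k => x k + y k := by
      funext k; rw [lp.coeFn_add]; rfl
    show Tfun (x + y) n = Tfun x n + Tfun y n
    simp only [Tfun, hco, ofScalars_sum_eq, smul_eq_mul]
    rw [show (∑' k, (x k + y k) * tseq n ^ k)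
        = (∑' k, (x k * tseq n ^ k + y k * tseq n ^ k)) by
          congr 1; funext k; ring]
    rw [Summable.tsum_add hx hy]
    ring
  map_smul' a x := by
    apply lp.ext
    funext n
    have hco : (fun k => ((a • x) : ellOne) k) = fun k => a * x k := by
      funext k; rw [lp.coeFn_smul]; rfl
    show Tfun (a • x) n = a * Tfun x n
    simp only [Tfun, hco, ofScalars_sum_eq, smul_eq_mul]
    rw [show (∑' k, (a * x k) * tseq n ^ k) = (∑' k, a * (x k * tseq n ^ k)) by
          congr 1; funext k; ring]
    rw [tsum_mul_left]
    ring

lemma TL_norm (x : ellOne) : ‖TL x‖ ≤ 2 * ‖x‖ := by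
  rw [norm_eq (TL x)]
  have hcoe : ∀ n, ‖(TL x) n‖ = ‖Tfun x n‖ := fun n => rfl
  calc (∑' n, ‖(TL x) n‖) ≤ ∑' n, (2⁻¹:ℝ) ^ n * ‖x‖ := by
        refine Summable.tsum_le_tsum (fun n => ?_) (summable_coe (TL x)) (summable_bound ‖x‖)
        rw [hcoe n]; exact Tfun_norm_le x n
    _ = (∑' n, (2⁻¹:ℝ) ^ n) * ‖x‖ := tsum_mul_right
    _ = 2 * ‖x‖ := by rw [tsum_geometric_inv_two]

/-- The operator. -/
def T : ellOne →L[ℝ] ellOne := TL.mkContinuous 2 TL_norm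

lemma T_apply (x : ellOne) (n : ℕ) :
    (T x) n = 2⁻¹ ^ n * ofScalarsSum (fun k => x k) (tseq n) := rfl

lemma coe_ne_zero {x : ellOne} (hx : x ≠ 0) : (fun k => (x k : ℝ)) ≠ 0 := by
  intro h
  exact hx (lp.ext (funext fun k => congrFun h k))

lemma zeros_subset {x : ellOne} (n : ℕ) (h : (T x) n = 0) :
    ofScalarsSum (fun k => x k) (tseq n) = 0 := by
  rw [T_apply] at h
  rcases mul_eq_zero.mp h with h' | h'
  · exact absurd h' (by positivity)
  · exact h'

lemma T_inj : Function.Injective T := by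
  rw [injective_iff_map_eq_zero]
  intro x hx
  by_contra hne
  have hfin := finite_zeros (summable_coe x) (coe_ne_zero hne)
  have huniv : {n : ℕ | ofScalarsSum (fun k => x k) (tseq n) = 0} = Set.univ := by
    ext n
    simp only [Set.mem_setOf_eq, Set.mem_univ, iff_true]
    refine zeros_subset n ?_
    rw [hx]
    rfl
  rw [huniv] at hfin
  exact Set.infinite_univ hfin

/-- The canonical basis vectors. -/
def sing (j : ℕ) : ellOne := lp.single 1 j 1

lemma sing_apply (j n : ℕ) : sing j n = if n = j then 1 else 0 := by
  rw [sing, lp.single_apply]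
  split_ifs with h
  · subst h; simp
  · simp [h]

lemma T_sing_apply (k n : ℕ) : (T (sing k)) n = 2⁻¹ ^ n * tseq n ^ k := by
  rw [T_apply, ofScalars_sum_eq]
  congr 1
  rw [tsum_eq_single k]
  · rw [sing_apply]; simp
  · intro b hb
    rw [sing_apply]; simp [hb]

/-- The operator range. -/
def Y : Submodule ℝ ellOne := LinearMap.range (T : ellOne →ₗ[ℝ] ellOne)

lemma sing_mem_C : ∀ j, sing j ∈ Y.topologicalClosure := by
  intro j
  induction j using Nat.strong_induction_on with
  | _ j IH =>
  set C := Y.topologicalClosure with hC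
  set q : ℝ := tseq (j+1) / tseq j with hqdef
  have hq0 : 0 ≤ q := div_nonneg (tseq_pos _).le (tseq_pos _).le
  have hq1 : q < 1 := (div_lt_one (tseq_pos j)).mpr (tseq_anti (lt_add_one j))
  set z : ℕ → ellOne := fun k =>
    (tseq j)⁻¹ ^ k • (T (sing k) - ∑ i ∈ Finset.range j, ((2:ℝ)⁻¹ ^ i * tseq i ^ k) • sing i)
    with hzdef
  have hzC : ∀ k, z k ∈ C := by
    intro k
    refine C.smul_mem _ (C.sub_mem ?_ (C.sum_mem fun i hi => C.smul_mem _ ?_))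
    · exact Y.le_topologicalClosure ⟨sing k, rfl⟩
    · exact IH i (Finset.mem_range.mp hi)
  have key : ∀ k n, ‖(z k - (2:ℝ)⁻¹ ^ j • sing j) n‖ ≤ (2:ℝ)⁻¹ ^ n * q ^ k := by
    intro k n
    have hcoord : (z k - (2:ℝ)⁻¹ ^ j • sing j) n =
        (tseq j)⁻¹ ^ k * ((2:ℝ)⁻¹ ^ n * tseq n ^ k -
          ∑ i ∈ Finset.range j, ((2:ℝ)⁻¹ ^ i * tseq i ^ k) * (if n = i then 1 else 0)) -
          (2:ℝ)⁻¹ ^ j * (if n = j then 1 else 0) := by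
      rw [hzdef]
      simp only [lp.coeFn_sub, Pi.sub_apply, lp.coeFn_smul, Pi.smul_apply, smul_eq_mul,
        lp.coeFn_sum, Finset.sum_apply, T_sing_apply, sing_apply]
    rcases lt_trichotomy n j with hlt | heq | hgt
    · -- n < j : coordinate is 0
      have hsum : (∑ i ∈ Finset.range j, ((2:ℝ)⁻¹ ^ i * tseq i ^ k) * (if n = i then 1 else 0))
          = (2:ℝ)⁻¹ ^ n * tseq n ^ k := by
        rw [show (∑ i ∈ Finset.range j, ((2:ℝ)⁻¹ ^ i * tseq i ^ k) * (if n = i then 1 else 0))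
            = ∑ i ∈ Finset.range j, (if n = i then (2:ℝ)⁻¹ ^ i * tseq i ^ k else 0) by
              refine Finset.sum_congr rfl fun i _ => ?_
              split_ifs <;> ring]
        rw [Finset.sum_ite_eq (Finset.range j) n (fun i => (2:ℝ)⁻¹ ^ i * tseq i ^ k),
          if_pos (Finset.mem_range.mpr hlt)]
      rw [hcoord, hsum, if_neg hlt.ne]
      simp only [sub_self, mul_zero, sub_zero, norm_zero]
      positivity
    · -- n = j : coordinate is 0
      subst heq
      have hsum : (∑ i ∈ Finset.range n, ((2:ℝ)⁻¹ ^ i * tseq i ^ k) * (if n = i then 1 else 0))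
          = 0 := by
        refine Finset.sum_eq_zero fun i hi => ?_
        rw [if_neg (Finset.mem_range.mp hi).ne', mul_zero]
      rw [hcoord, hsum, if_pos rfl, sub_zero, mul_one]
      have : (tseq n)⁻¹ ^ k * ((2:ℝ)⁻¹ ^ n * tseq n ^ k) = (2:ℝ)⁻¹ ^ n := by
        rw [← mul_assoc, mul_comm ((tseq n)⁻¹ ^ k), mul_assoc, ← mul_pow,
          inv_mul_cancel₀ (tseq_pos n).ne', one_pow, mul_one]
      rw [this, sub_self, norm_zero]
      positivity
    · -- n > j
      have hsum : (∑ i ∈ Finset.range j, ((2:ℝ)⁻¹ ^ i * tseq i ^ k) * (if n = i then 1 else 0))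
          = 0 := by
        refine Finset.sum_eq_zero fun i hi => ?_
        have hi' : i < j := Finset.mem_range.mp hi
        rw [if_neg (by omega : ¬ n = i), mul_zero]
      rw [hcoord, hsum, if_neg (by omega : ¬ n = j), mul_zero, sub_zero, sub_zero]
      have hval : (tseq j)⁻¹ ^ k * ((2:ℝ)⁻¹ ^ n * tseq n ^ k) = (2:ℝ)⁻¹ ^ n * (tseq n / tseq j) ^ k := by
        rw [div_pow]
        field_simp
        ring
      have hnn : 0 ≤ (2:ℝ)⁻¹ ^ n * (tseq n / tseq j) ^ k :=
        mul_nonneg (by positivity)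
          (pow_nonneg (div_nonneg (tseq_pos n).le (tseq_pos j).le) k)
      rw [hval, Real.norm_eq_abs, abs_of_nonneg hnn]
      refine mul_le_mul_of_nonneg_left ?_ (by positivity)
      refine pow_le_pow_left₀ (div_nonneg (tseq_pos n).le (tseq_pos j).le) ?_ k
      rw [hqdef]
      exact (div_le_div_iff_of_pos_right (tseq_pos j)).mpr (tseq_anti.antitone (by omega : j + 1 ≤ n))
  have hnorm : ∀ k, ‖z k - (2:ℝ)⁻¹ ^ j • sing j‖ ≤ 2 * q ^ k := by
    intro k
    rw [norm_eq (z k - (2:ℝ)⁻¹ ^ j • sing j)]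
    calc (∑' n, ‖(z k - (2:ℝ)⁻¹ ^ j • sing j) n‖) ≤ ∑' n, (2:ℝ)⁻¹ ^ n * q ^ k :=
          Summable.tsum_le_tsum (fun n => key k n) (summable_coe _) (summable_bound (q ^ k))
      _ = (∑' n, (2:ℝ)⁻¹ ^ n) * q ^ k := tsum_mul_right
      _ = 2 * q ^ k := by rw [tsum_geometric_inv_two]
  have hlim : Tendsto z atTop (𝓝 ((2:ℝ)⁻¹ ^ j • sing j)) := by
    rw [tendsto_iff_norm_sub_tendsto_zero]
    refine squeeze_zero (fun k => norm_nonneg _) hnorm ?_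
    have := (tendsto_pow_atTop_nhds_zero_of_lt_one hq0 hq1).const_mul (2:ℝ)
    simpa using this
  have hmem : (2:ℝ)⁻¹ ^ j • sing j ∈ C :=
    (Submodule.isClosed_topologicalClosure Y).mem_of_tendsto hlim
      (Eventually.of_forall hzC)
  have hfinal := C.smul_mem ((2:ℝ) ^ j) hmem
  rw [smul_smul] at hfinal
  have h1 : (2:ℝ) ^ j * (2:ℝ)⁻¹ ^ j = 1 := by
    rw [← mul_pow]
    norm_num
  rwa [h1, one_smul] at hfinal

lemma mem_C (f : ellOne) : f ∈ Y.topologicalClosure := by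
  have hs : HasSum (fun i => lp.single 1 i (f i)) f :=
    lp.hasSum_single (by norm_num : (1 : ℝ≥0∞) ≠ ⊤) f
  have hmem : ∀ s : Finset ℕ, (∑ i ∈ s, lp.single 1 i (f i)) ∈ Y.topologicalClosure := by
    intro s
    refine Submodule.sum_mem _ fun i _ => ?_
    have h1 : lp.single 1 i (f i) = f i • sing i := by
      rw [sing, ← lp.single_smul]
      norm_num
    rw [h1]
    exact Submodule.smul_mem _ _ (sing_mem_C i)
  exact (Submodule.isClosed_topologicalClosure Y).mem_of_tendsto hs
    (Eventually.of_forall hmem)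

lemma dense_Y : Dense (Y : Set ellOne) := by
  rw [dense_iff_closure_eq, Set.eq_univ_iff_forall]
  intro f
  rw [← Submodule.topologicalClosure_coe]
  exact mem_C f

lemma sing_linearIndependent : LinearIndependent ℝ sing := by
  rw [linearIndependent_iff']
  intro s g hsum i hi
  have h := congrFun (congrArg (fun f : ellOne => (f : ℕ → ℝ)) hsum) i
  simp only [lp.coeFn_sum, Finset.sum_apply, lp.coeFn_smul, Pi.smul_apply, smul_eq_mul,
    sing_apply, lp.coeFn_zero, Pi.zero_apply, mul_ite, mul_one, mul_zero] at h
  rwa [Finset.sum_ite_eq s i g, if_pos hi] at h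

lemma not_fd : ¬ FiniteDimensional ℝ ellOne := by
  intro h
  exact Module.Finite.not_linearIndependent_of_infinite sing sing_linearIndependent

lemma range_T : Set.range (⇑T) = (Y : Set ellOne) := by
  rw [Y, LinearMap.coe_range]
  rfl

lemma zero_coords {y : ellOne} (hy : y ∈ Y) (hne : y ≠ 0) : {n : ℕ | y n = 0}.Finite := by
  obtain ⟨x, rfl⟩ := hy
  have hx : x ≠ 0 := by
    rintro rfl
    exact hne (map_zero _)
  refine (finite_zeros (summable_coe x) (coe_ne_zero hx)).subset ?_
  intro n hn
  exact zeros_subset n hn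

end DenseOR

theorem dense_operator_range_in_ell1_with_finitely_many_zero_coordinates :
    ∃ Y : Submodule ℝ ellOne, IsOperatorRange Y ∧ Dense (Y : Set ellOne) ∧
      ∀ y : ellOne, y ∈ Y → y ≠ 0 → {n : ℕ | y n = 0}.Finite := by
  refine ⟨DenseOR.Y, ?_, DenseOR.dense_Y, fun y hy hne => DenseOR.zero_coords hy hne⟩
  exact ⟨ellOne, inferInstance, inferInstance, inferInstance, DenseOR.not_fd, DenseOR.T,
    DenseOR.T_inj, DenseOR.range_T⟩
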